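/- Let H be a thick spider with partition (S, K, R) such that the subgraph of H induced by R is P4-sparse, let u ∈ K, and let uw be a tail added to H (w ∉ V(H)). Then the minimum number of fill edges (excluding the tail uw) in a P4-sparse completion of H+uw equals 1; moreover, adding the single fill edge joining u to its unique non-neighbor in S yields a P4-sparse graph. -/

import Mathlib

open SimpleGraph Set

variable {α : Type*}

/-- The graph `G + uw` obtained from `G` by adding the tail edge `uw`. -/
def addTail (G : SimpleGraph α) (u w : α) : SimpleGraph α :=
  G ⊔ SimpleGraph.fromEdgeSet {s(u, w)}

/-- The number of fill edges of a completion `G'` of the base graph `base`: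
the edges of `G'` that are not edges of `base`. -/
noncomputable def fillCount (base G' : SimpleGraph α) : ℕ :=
  (G'.edgeSet \ base.edgeSet).ncard

/-- `S` is an independent set of the graph `G`. -/
def IsIndepSetOn (G : SimpleGraph α) (S : Set α) : Prop :=
  ∀ x ∈ S, ∀ y ∈ S, ¬ G.Adj x y

/-- A graph is split if its vertex set can be partitioned into a clique and an
independent set. -/
def IsSplitGraph (G : SimpleGraph α) : Prop :=
  ∃ K S : Set α, K ∪ S = Set.univ ∧ Disjoint K S ∧ G.IsClique K ∧ IsIndepSetOn G S

/-- `a b c d` (in this order) induce a chordless path `P₄` in `G`. -/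
def IsInducedP4 (G : SimpleGraph α) (a b c d : α) : Prop :=
  a ≠ b ∧ a ≠ c ∧ a ≠ d ∧ b ≠ c ∧ b ≠ d ∧ c ≠ d ∧
  G.Adj a b ∧ G.Adj b c ∧ G.Adj c d ∧ ¬ G.Adj a c ∧ ¬ G.Adj a d ∧ ¬ G.Adj b d

/-- `a b c d` (in this order) induce a chordless cycle `C₄` in `G`. -/
def IsInducedC4 (G : SimpleGraph α) (a b c d : α) : Prop :=
  a ≠ b ∧ a ≠ c ∧ a ≠ d ∧ b ≠ c ∧ b ≠ d ∧ c ≠ d ∧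
  G.Adj a b ∧ G.Adj b c ∧ G.Adj c d ∧ G.Adj d a ∧ ¬ G.Adj a c ∧ ¬ G.Adj b d

/-- `a b c d` induce a `2K₂` (two independent edges `ab` and `cd`) in `G`. -/
def IsInduced2K2 (G : SimpleGraph α) (a b c d : α) : Prop :=
  a ≠ b ∧ a ≠ c ∧ a ≠ d ∧ b ≠ c ∧ b ≠ d ∧ c ≠ d ∧
  G.Adj a b ∧ G.Adj c d ∧ ¬ G.Adj a c ∧ ¬ G.Adj a d ∧ ¬ G.Adj b c ∧ ¬ G.Adj b d

/-- A graph is threshold iff it has no induced `C₄`, `P₄`, or `2K₂`. -/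
def IsThresholdGraph (G : SimpleGraph α) : Prop :=
  (∀ a b c d, ¬ IsInducedC4 G a b c d) ∧ (∀ a b c d, ¬ IsInducedP4 G a b c d) ∧
  (∀ a b c d, ¬ IsInduced2K2 G a b c d)

/-- A graph is quasi-threshold iff it has no induced `C₄` or `P₄`. -/
def IsQuasiThresholdGraph (G : SimpleGraph α) : Prop :=
  (∀ a b c d, ¬ IsInducedC4 G a b c d) ∧ (∀ a b c d, ¬ IsInducedP4 G a b c d)

/-- `t` is the vertex set of an induced `P₄` of `G`. -/
def IsP4SetOn (G : SimpleGraph α) (t : Set α) : Prop :=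
  ∃ a b c d : α, t = {a, b, c, d} ∧ IsInducedP4 G a b c d

/-- A graph is `P₄`-sparse iff every set of five vertices induces at most one `P₄`. -/
def IsP4Sparse (G : SimpleGraph α) : Prop :=
  ∀ s : Set α, s.ncard = 5 →
    ∀ t₁ ⊆ s, ∀ t₂ ⊆ s, IsP4SetOn G t₁ → IsP4SetOn G t₂ → t₁ = t₂

/-- The subgraph of `H` induced by the set `R` (as a graph on the same vertex type,
all vertices outside `R` being isolated). -/
def restrictSet (H : SimpleGraph α) (R : Set α) : SimpleGraph α where
  Adj x y := H.Adj x y ∧ x ∈ R ∧ y ∈ R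
  symm := ⟨fun x y ⟨h, hx, hy⟩ => ⟨h.symm, hy, hx⟩⟩
  loopless := ⟨fun x h => H.loopless.irrefl x h.1⟩

/-- `(S, K, R)` is a thin-spider partition of (the vertex set of) `H`. -/
def ThinSpider (H : SimpleGraph α) (S K R : Set α) : Prop :=
  IsIndepSetOn H S ∧ H.IsClique K ∧ S.ncard = K.ncard ∧ 2 ≤ K.ncard ∧
  Disjoint S K ∧ Disjoint S R ∧ Disjoint K R ∧
  (∀ r ∈ R, ∀ k ∈ K, H.Adj r k) ∧ (∀ r ∈ R, ∀ s ∈ S, ¬ H.Adj r s) ∧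
  ∃ f : α → α, Set.BijOn f S K ∧ ∀ s ∈ S, ∀ k ∈ K, (H.Adj s k ↔ k = f s)

/-- `(S, K, R)` is a thick-spider partition of (the vertex set of) `H`;
thick spiders are assumed to have `|K| ≥ 3`. -/
def ThickSpider (H : SimpleGraph α) (S K R : Set α) : Prop :=
  IsIndepSetOn H S ∧ H.IsClique K ∧ S.ncard = K.ncard ∧ 3 ≤ K.ncard ∧
  Disjoint S K ∧ Disjoint S R ∧ Disjoint K R ∧
  (∀ r ∈ R, ∀ k ∈ K, H.Adj r k) ∧ (∀ r ∈ R, ∀ s ∈ S, ¬ H.Adj r s) ∧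
  ∃ f : α → α, Set.BijOn f S K ∧ ∀ s ∈ S, ∀ k ∈ K, (H.Adj s k ↔ k ≠ f s)

/-- The set of possible numbers of fill edges of completions of `base` into the
graph class `C`. -/
def completionFills (C : SimpleGraph α → Prop) (base : SimpleGraph α) : Set ℕ :=
  {n | ∃ G' : SimpleGraph α, base ≤ G' ∧ C G' ∧ fillCount base G' = n}

private lemma ncard3' {β : Type*} {a b c : β} (hab : a ≠ b) (hac : a ≠ c) (hbc : b ≠ c) :
    ({a, b, c} : Set β).ncard = 3 := by
  rw [Set.ncard_insert_of_notMem (by simp [hab, hac]) (Set.toFinite _),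
      Set.ncard_insert_of_notMem (by simp [hbc]) (Set.toFinite _), Set.ncard_singleton]

private lemma ncard4' {β : Type*} {a b c d : β} (hab : a ≠ b) (hac : a ≠ c) (had : a ≠ d)
    (hbc : b ≠ c) (hbd : b ≠ d) (hcd : c ≠ d) : ({a, b, c, d} : Set β).ncard = 4 := by
  rw [Set.ncard_insert_of_notMem (by simp [hab, hac, had]) (Set.toFinite _),
      ncard3' hbc hbd hcd]

private lemma ncard5' {β : Type*} {a b c d e : β} (hab : a ≠ b) (hac : a ≠ c) (had : a ≠ d)
    (hae : a ≠ e) (hbc : b ≠ c) (hbd : b ≠ d) (hbe : b ≠ e) (hcd : c ≠ d) (hce : c ≠ e)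
    (hde : d ≠ e) : ({a, b, c, d, e} : Set β).ncard = 5 := by
  rw [Set.ncard_insert_of_notMem (by simp [hab, hac, had, hae]) (Set.toFinite _),
      ncard4' hbc hbd hbe hcd hce hde]

/-- tail at `u ∈ K` of a thick spider with `H[R]` P₄-sparse: the
minimum number of fill edges is `1`, and adding the single fill edge joining `u`
to its (unique) non-neighbor in `S` yields a P₄-sparse graph. -/
theorem thickSpider_tail_K [Fintype α]
    (H : SimpleGraph α) (u w : α) (S K R : Set α)
    (hspider : ThickSpider H S K R)
    (hcover : S ∪ K ∪ R = {w}ᶜ)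
    (hw : ∀ x, ¬ H.Adj w x)
    (hRsparse : IsP4Sparse (restrictSet H R)) (hu : u ∈ K) :
    IsLeast (completionFills IsP4Sparse (addTail H u w)) 1 ∧
      ∀ v ∈ S, ¬ H.Adj u v →
        IsP4Sparse (addTail H u w ⊔ SimpleGraph.fromEdgeSet {s(u, v)}) := by
  classical
  obtain ⟨hSind, hKcl, hSKcard, hK3, hdSK, hdSR, hdKR, hRK, hRS, f, hf, hadj⟩ := hspider
  have memC : ∀ x : α, x ≠ w → x ∈ S ∪ K ∪ R := by
    intro x hx
    have hx' : x ∈ ({w}ᶜ : Set α) := by simp [hx]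
    rwa [← hcover] at hx'
  have neW : ∀ x : α, x ∈ S ∪ K ∪ R → x ≠ w := by
    intro x hx
    rw [hcover] at hx
    simpa using hx
  have memU : ∀ x y : α, H.Adj x y → x ∈ S ∪ K ∪ R := by
    intro x y hxy
    refine memC x ?_
    rintro rfl
    exact hw y hxy
  have nbrS : ∀ s' ∈ S, ∀ x, H.Adj s' x → x ∈ K := by
    intro s hs x hx
    rcases memU x s hx.symm with (h | h) | h
    · exact absurd hx (hSind s hs x h)
    · exact h
    · exact absurd hx.symm (hRS x h s hs)
  have huW : u ≠ w := neW u (Or.inl (Or.inr hu))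
  have classify : ∀ a b c d : α, IsInducedP4 H a b c d →
      (a ∈ R ∧ b ∈ R ∧ c ∈ R ∧ d ∈ R) ∨ (a ∈ S ∧ d ∈ S ∧ b = f d ∧ c = f a) := by
    intro a b c d hp
    obtain ⟨hab, hac, had, hbc, hbd, hcd, Aab, Abc, Acd, Nac, Nad, Nbd⟩ := hp
    have hbS : b ∉ S := fun h => Nac (hKcl (nbrS b h a Aab.symm) (nbrS b h c Abc) hac)
    have hcS : c ∉ S := fun h => Nbd (hKcl (nbrS c h b Abc.symm) (nbrS c h d Acd) hbd)
    rcases memU b c Abc with (h | hbK) | hbR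
    · exact absurd h hbS
    · have hdS : d ∈ S := by
        rcases memU d c Acd.symm with (h | h) | h
        · exact h
        · exact absurd (hKcl hbK h hbd) Nbd
        · exact absurd ((hRK d h b hbK).symm) Nbd
      have hcK : c ∈ K := nbrS d hdS c Acd.symm
      have haS : a ∈ S := by
        rcases memU a b Aab with (h | h) | h
        · exact h
        · exact absurd (hKcl h hcK hac) Nac
        · exact absurd (hRK a h c hcK) Nac
      refine Or.inr ⟨haS, hdS, ?_, ?_⟩
      · by_contra hne
        exact Nbd ((hadj d hdS b hbK).mpr hne).symm
      · by_contra hne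
        exact Nac ((hadj a haS c hcK).mpr hne)
    · have haR : a ∈ R := by
        rcases memU a b Aab with (h | h) | h
        · exact absurd Aab.symm (hRS b hbR a h)
        · rcases memU c b Abc.symm with (h' | h') | h'
          · exact absurd h' hcS
          · exact absurd (hKcl h h' hac) Nac
          · exact absurd ((hRK c h' a h).symm) Nac
        · exact h
      have hcR : c ∈ R := by
        rcases memU c b Abc.symm with (h | h) | h
        · exact absurd h hcS
        · exact absurd (hRK a haR c h) Nac
        · exact h
      have hdR : d ∈ R := by
        rcases memU d c Acd.symm with (h | h) | h
        · exact absurd Acd (hRS c hcR d h)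
        · exact absurd (hRK a haR d h) Nad
        · exact h
      exact Or.inl ⟨haR, hbR, hcR, hdR⟩
  have main : ∀ v, v ∈ S → f v = u →
      IsP4Sparse (addTail H u w ⊔ SimpleGraph.fromEdgeSet {s(u, v)}) := by
    intro v hvS hfv
    have hvW : v ≠ w := neW v (Or.inl (Or.inl hvS))
    have huv : u ≠ v := fun h => (Set.disjoint_left.mp hdSK hvS) (h ▸ hu)
    set G' := addTail H u w ⊔ SimpleGraph.fromEdgeSet {s(u, v)} with hG'
    have hGadj : ∀ x y : α, G'.Adj x y ↔
        H.Adj x y ∨ (s(x, y) = s(u, w) ∧ x ≠ y) ∨ (s(x, y) = s(u, v) ∧ x ≠ y) := by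
      intro x y
      simp only [hG', addTail, SimpleGraph.sup_adj, SimpleGraph.fromEdgeSet_adj,
        Set.mem_singleton_iff]
      tauto
    have huniv : ∀ x, x ≠ u → G'.Adj u x := by
      intro x hxu
      by_cases hxw : x = w
      · exact (hGadj u x).mpr (Or.inr (Or.inl ⟨by rw [hxw], fun h => hxu h.symm⟩))
      · rcases memC x hxw with (hxS | hxK) | hxR
        · by_cases hxv : x = v
          · exact (hGadj u x).mpr (Or.inr (Or.inr ⟨by rw [hxv], fun h => hxu h.symm⟩))
          · have hfx : u ≠ f x := fun h => hxv (hf.injOn hxS hvS (hfv.trans h).symm)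
            exact (hGadj u x).mpr (Or.inl ((hadj x hxS u hu).mpr hfx).symm)
        · exact (hGadj u x).mpr (Or.inl (hKcl hu hxK (fun h => hxu h.symm)))
        · exact (hGadj u x).mpr (Or.inl (hRK x hxR u hu).symm)
    have hwnbr : ∀ x, G'.Adj w x → x = u := by
      intro x hx
      rcases (hGadj w x).mp hx with h | ⟨he, _⟩ | ⟨he, _⟩
      · exact absurd h (hw x)
      · rcases Sym2.eq_iff.mp he with ⟨h1, _⟩ | ⟨_, h2⟩
        · exact absurd h1.symm huW
        · exact h2
      · rcases Sym2.eq_iff.mp he with ⟨h1, _⟩ | ⟨h1, h2⟩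
        · exact absurd h1.symm huW
        · exact absurd h1.symm hvW
    have toH : ∀ a b c d : α, IsInducedP4 G' a b c d → IsInducedP4 H a b c d := by
      intro a b c d hp
      obtain ⟨hab, hac, had, hbc, hbd, hcd, Aab, Abc, Acd, Nac, Nad, Nbd⟩ := hp
      have hau : a ≠ u := by rintro rfl; exact Nac (huniv c (Ne.symm hac))
      have hbu : b ≠ u := by rintro rfl; exact Nbd (huniv d (Ne.symm hbd))
      have hcu : c ≠ u := by rintro rfl; exact Nac (huniv a hac).symm
      have hdu : d ≠ u := by rintro rfl; exact Nad (huniv a had).symm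
      have down : ∀ x y : α, x ≠ u → y ≠ u → G'.Adj x y → H.Adj x y := by
        intro x y hx hy h
        rcases (hGadj x y).mp h with h' | ⟨he, _⟩ | ⟨he, _⟩
        · exact h'
        · rcases Sym2.eq_iff.mp he with ⟨h1, _⟩ | ⟨_, h2⟩
          · exact absurd h1 hx
          · exact absurd h2 hy
        · rcases Sym2.eq_iff.mp he with ⟨h1, _⟩ | ⟨_, h2⟩
          · exact absurd h1 hx
          · exact absurd h2 hy
      have upN : ∀ x y : α, ¬ G'.Adj x y → ¬ H.Adj x y :=
        fun x y h hH => h ((hGadj x y).mpr (Or.inl hH))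
      exact ⟨hab, hac, had, hbc, hbd, hcd, down a b hau hbu Aab, down b c hbu hcu Abc,
        down c d hcu hdu Acd, upN a c Nac, upN a d Nad, upN b d Nbd⟩
    intro sv hs5 t1 ht1 t2 ht2 h1 h2
    obtain ⟨a1, b1, c1, d1, rfl, hp1⟩ := h1
    obtain ⟨a2, b2, c2, d2, rfl, hp2⟩ := h2
    have hq1 := toH _ _ _ _ hp1
    have hq2 := toH _ _ _ _ hp2
    have hmix : ∀ x1 y1 z1 u1 x2 y2 z2 u2 : α,
        ({x1, y1, z1, u1} : Set α) ⊆ sv → ({x2, y2, z2, u2} : Set α) ⊆ sv →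
        IsInducedP4 H x1 y1 z1 u1 → IsInducedP4 H x2 y2 z2 u2 →
        (x1 ∈ R ∧ y1 ∈ R ∧ z1 ∈ R ∧ u1 ∈ R) →
        (x2 ∈ S ∧ u2 ∈ S ∧ y2 = f u2 ∧ z2 = f x2) → False := by
      intro x1 y1 z1 u1 x2 y2 z2 u2 hsub1 hsub2 hP1 hP2 hR1 hS2
      obtain ⟨e12, e13, e14, e23, e24, e34, -, -, -, -, -, -⟩ := hP1
      obtain ⟨g12, g13, g14, g23, g24, g34, -, -, -, -, -, -⟩ := hP2
      have hy2K : y2 ∈ K := hS2.2.2.1 ▸ hf.mapsTo hS2.2.1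
      have hz2K : z2 ∈ K := hS2.2.2.2 ▸ hf.mapsTo hS2.1
      have hdisj : Disjoint ({x1, y1, z1, u1} : Set α) ({x2, y2, z2, u2} : Set α) := by
        rw [Set.disjoint_left]
        intro x hx hx'
        have hxR : x ∈ R := by
          simp only [Set.mem_insert_iff, Set.mem_singleton_iff] at hx
          rcases hx with rfl | rfl | rfl | rfl
          · exact hR1.1
          · exact hR1.2.1
          · exact hR1.2.2.1
          · exact hR1.2.2.2
        simp only [Set.mem_insert_iff, Set.mem_singleton_iff] at hx'
        rcases hx' with rfl | rfl | rfl | rfl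
        · exact Set.disjoint_left.mp hdSR hS2.1 hxR
        · exact Set.disjoint_left.mp hdKR hy2K hxR
        · exact Set.disjoint_left.mp hdKR hz2K hxR
        · exact Set.disjoint_left.mp hdSR hS2.2.1 hxR
      have h8 : (({x1, y1, z1, u1} : Set α) ∪ {x2, y2, z2, u2}).ncard = 8 := by
        rw [Set.ncard_union_eq hdisj (Set.toFinite _) (Set.toFinite _),
          ncard4' e12 e13 e14 e23 e24 e34, ncard4' g12 g13 g14 g23 g24 g34]
      have hle : (({x1, y1, z1, u1} : Set α) ∪ {x2, y2, z2, u2}).ncard ≤ sv.ncard :=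
        Set.ncard_le_ncard (Set.union_subset hsub1 hsub2) sv.toFinite
      rw [h8, hs5] at hle
      omega
    rcases classify _ _ _ _ hq1 with hR1 | hS1 <;> rcases classify _ _ _ _ hq2 with hR2 | hS2
    · have toR : ∀ a b c d : α, IsInducedP4 H a b c d → a ∈ R → b ∈ R → c ∈ R → d ∈ R →
          IsInducedP4 (restrictSet H R) a b c d := by
        intro a b c d hp ha hb hc hd
        obtain ⟨h1, h2, h3, h4, h5, h6, A1, A2, A3, N1, N2, N3⟩ := hp
        exact ⟨h1, h2, h3, h4, h5, h6, ⟨A1, ha, hb⟩, ⟨A2, hb, hc⟩, ⟨A3, hc, hd⟩,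
          fun h => N1 h.1, fun h => N2 h.1, fun h => N3 h.1⟩
      exact hRsparse sv hs5 _ ht1 _ ht2
        ⟨a1, b1, c1, d1, rfl, toR _ _ _ _ hq1 hR1.1 hR1.2.1 hR1.2.2.1 hR1.2.2.2⟩
        ⟨a2, b2, c2, d2, rfl, toR _ _ _ _ hq2 hR2.1 hR2.2.1 hR2.2.2.1 hR2.2.2.2⟩
    · exact (hmix _ _ _ _ _ _ _ _ ht1 ht2 hq1 hq2 hR1 hS2).elim
    · exact (hmix _ _ _ _ _ _ _ _ ht2 ht1 hq2 hq1 hR2 hS1).elim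
    · obtain ⟨ha1S, hd1S, hb1, hc1⟩ := hS1
      obtain ⟨ha2S, hd2S, hb2, hc2⟩ := hS2
      have had1 : a1 ≠ d1 := hq1.2.2.1
      have had2 : a2 ≠ d2 := hq2.2.2.1
      subst hb1; subst hc1; subst hb2; subst hc2
      have key : ∀ x, x ∈ S → x ∈ sv → f x ∈ sv → x ∉ ({a1, d1} : Set α) → False := by
        intro x hxS hxs hfxs hxn
        have hxa1 : x ≠ a1 := by
          simp only [Set.mem_insert_iff, Set.mem_singleton_iff] at hxn; tauto
        have hxd1 : x ≠ d1 := by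
          simp only [Set.mem_insert_iff, Set.mem_singleton_iff] at hxn; tauto
        have hfinj : ∀ p q, p ∈ S → q ∈ S → p ≠ q → f p ≠ f q :=
          fun p q hp hq hne h => hne (hf.injOn hp hq h)
        have hdisj : Disjoint ({a1, d1, x} : Set α) ({f a1, f d1, f x} : Set α) := by
          rw [Set.disjoint_left]
          intro y hy hy'
          have hyS : y ∈ S := by
            simp only [Set.mem_insert_iff, Set.mem_singleton_iff] at hy
            rcases hy with rfl | rfl | rfl
            · exact ha1S
            · exact hd1S
            · exact hxS
          have hyK : y ∈ K := by
            simp only [Set.mem_insert_iff, Set.mem_singleton_iff] at hy'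
            rcases hy' with rfl | rfl | rfl
            · exact hf.mapsTo ha1S
            · exact hf.mapsTo hd1S
            · exact hf.mapsTo hxS
          exact Set.disjoint_left.mp hdSK hyS hyK
        have hsub : ({a1, d1, x} : Set α) ∪ ({f a1, f d1, f x} : Set α) ⊆ sv := by
          apply Set.union_subset
          · intro y hy
            simp only [Set.mem_insert_iff, Set.mem_singleton_iff] at hy
            rcases hy with rfl | rfl | rfl
            · exact ht1 (by simp)
            · exact ht1 (by simp)
            · exact hxs
          · intro y hy
            simp only [Set.mem_insert_iff, Set.mem_singleton_iff] at hy
            rcases hy with rfl | rfl | rfl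
            · exact ht1 (by simp)
            · exact ht1 (by simp)
            · exact hfxs
        have h6 : (({a1, d1, x} : Set α) ∪ ({f a1, f d1, f x} : Set α)).ncard = 6 := by
          rw [Set.ncard_union_eq hdisj (Set.toFinite _) (Set.toFinite _),
            ncard3' had1 (Ne.symm hxa1) (Ne.symm hxd1),
            ncard3' (hfinj _ _ ha1S hd1S had1) (hfinj _ _ ha1S hxS (Ne.symm hxa1))
              (hfinj _ _ hd1S hxS (Ne.symm hxd1))]
        have hle := Set.ncard_le_ncard hsub sv.toFinite
        rw [h6, hs5] at hle
        omega
      have hpair : ({a1, d1} : Set α) = {a2, d2} := by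
        by_cases ha2m : a2 ∈ ({a1, d1} : Set α)
        · by_cases hd2m : d2 ∈ ({a1, d1} : Set α)
          · refine (Set.eq_of_subset_of_ncard_le ?_ ?_ (Set.toFinite _)).symm
            · intro y hy
              simp only [Set.mem_insert_iff, Set.mem_singleton_iff] at hy
              rcases hy with rfl | rfl
              · exact ha2m
              · exact hd2m
            · rw [Set.ncard_pair had1, Set.ncard_pair had2]
          · exact (key d2 hd2S (ht2 (by simp)) (ht2 (by simp)) hd2m).elim
        · exact (key a2 ha2S (ht2 (by simp)) (ht2 (by simp)) ha2m).elim
      rcases Set.pair_eq_pair_iff.mp hpair with ⟨h1, h2⟩ | ⟨h1, h2⟩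
      · subst h1; subst h2; rfl
      · subst h1; subst h2
        ext y
        simp only [Set.mem_insert_iff, Set.mem_singleton_iff]
        tauto
  have hBadj : ∀ x y : α, (addTail H u w).Adj x y ↔
      H.Adj x y ∨ (s(x, y) = s(u, w) ∧ x ≠ y) := by
    intro x y
    simp only [addTail, SimpleGraph.sup_adj, SimpleGraph.fromEdgeSet_adj,
      Set.mem_singleton_iff]
  obtain ⟨v, hvS, hfv⟩ := hf.surjOn hu
  have hvW : v ≠ w := neW v (Or.inl (Or.inl hvS))
  have huv : u ≠ v := fun h => (Set.disjoint_left.mp hdSK hvS) (h ▸ hu)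
  have hnAdjuv : ¬ H.Adj u v := by
    intro h
    exact ((hadj v hvS u hu).mp h.symm) hfv.symm
  have hnot : ¬ IsP4Sparse (addTail H u w) := by
    intro hsp
    have h2 : 1 < (K \ {u}).ncard := by
      rw [Set.ncard_diff_singleton_of_mem hu]
      omega
    obtain ⟨k1, hk1, k2, hk2, hk12⟩ := (Set.one_lt_ncard (Set.toFinite _)).mp h2
    have hk1K : k1 ∈ K := hk1.1
    have hk2K : k2 ∈ K := hk2.1
    have hk1u : k1 ≠ u := by simpa using hk1.2
    have hk2u : k2 ≠ u := by simpa using hk2.2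
    have hk1w : k1 ≠ w := neW k1 (Or.inl (Or.inr hk1K))
    have hk2w : k2 ≠ w := neW k2 (Or.inl (Or.inr hk2K))
    have hk1v : k1 ≠ v := fun h => Set.disjoint_left.mp hdSK hvS (h ▸ hk1K)
    have hk2v : k2 ≠ v := fun h => Set.disjoint_left.mp hdSK hvS (h ▸ hk2K)
    have hP4k : ∀ k, k ∈ K → k ≠ u → k ≠ w → k ≠ v →
        IsInducedP4 (addTail H u w) w u k v := by
      intro k hkK hku hkw hkv
      refine ⟨Ne.symm huW, Ne.symm hkw, Ne.symm hvW, Ne.symm hku, huv, hkv,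
        ?_, ?_, ?_, ?_, ?_, ?_⟩
      · exact (hBadj w u).mpr (Or.inr ⟨Sym2.eq_swap, Ne.symm huW⟩)
      · exact (hBadj u k).mpr (Or.inl (hKcl hu hkK (Ne.symm hku)))
      · exact (hBadj k v).mpr (Or.inl ((hadj v hvS k hkK).mpr (fun h => hku (hfv ▸ h))).symm)
      · intro h
        rcases (hBadj w k).mp h with h' | ⟨he, _⟩
        · exact hw k h'
        · rcases Sym2.eq_iff.mp he with ⟨h1, _⟩ | ⟨_, h2⟩
          · exact huW h1.symm
          · exact hku h2
      · intro h
        rcases (hBadj w v).mp h with h' | ⟨he, _⟩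
        · exact hw v h'
        · rcases Sym2.eq_iff.mp he with ⟨h1, _⟩ | ⟨_, h2⟩
          · exact huW h1.symm
          · exact huv h2.symm
      · intro h
        rcases (hBadj u v).mp h with h' | ⟨he, _⟩
        · exact hnAdjuv h'
        · rcases Sym2.eq_iff.mp he with ⟨_, h2⟩ | ⟨h1, _⟩
          · exact hvW h2
          · exact huW h1
    have hs5 : ({w, u, v, k1, k2} : Set α).ncard = 5 :=
      ncard5' (Ne.symm huW) (Ne.symm hvW) (Ne.symm hk1w) (Ne.symm hk2w) huv
        (Ne.symm hk1u) (Ne.symm hk2u) (Ne.symm hk1v) (Ne.symm hk2v) hk12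
    have heq := hsp {w, u, v, k1, k2} hs5 {w, u, k1, v}
      (by intro y hy; simp only [Set.mem_insert_iff, Set.mem_singleton_iff] at hy ⊢; tauto)
      {w, u, k2, v}
      (by intro y hy; simp only [Set.mem_insert_iff, Set.mem_singleton_iff] at hy ⊢; tauto)
      ⟨w, u, k1, v, rfl, hP4k k1 hk1K hk1u hk1w hk1v⟩
      ⟨w, u, k2, v, rfl, hP4k k2 hk2K hk2u hk2w hk2v⟩
    have hk1mem : k1 ∈ ({w, u, k2, v} : Set α) :=
      heq ▸ (by simp : k1 ∈ ({w, u, k1, v} : Set α))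
    simp only [Set.mem_insert_iff, Set.mem_singleton_iff] at hk1mem
    rcases hk1mem with h | h | h | h
    · exact hk1w h
    · exact hk1u h
    · exact hk12 h
    · exact hk1v h
  refine ⟨⟨⟨addTail H u w ⊔ SimpleGraph.fromEdgeSet {s(u, v)}, le_sup_left,
    main v hvS hfv, ?_⟩, ?_⟩, ?_⟩
  · have hnm : s(u, v) ∉ (addTail H u w).edgeSet := by
      rw [SimpleGraph.mem_edgeSet]
      intro h
      rcases (hBadj u v).mp h with h' | ⟨he, _⟩
      · exact hnAdjuv h'
      · rcases Sym2.eq_iff.mp he with ⟨_, h2⟩ | ⟨h1, _⟩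
        · exact hvW h2
        · exact huW h1
    have hE : (addTail H u w ⊔ SimpleGraph.fromEdgeSet {s(u, v)}).edgeSet =
        insert s(u, v) (addTail H u w).edgeSet := by
      rw [SimpleGraph.edgeSet_sup, SimpleGraph.edgeSet_fromEdgeSet]
      have hd : ({s(u, v)} : Set (Sym2 α)) \ {e | e.IsDiag} = {s(u, v)} := by
        ext e
        simp only [Set.mem_diff, Set.mem_singleton_iff, Set.mem_setOf_eq]
        constructor
        · exact fun h => h.1
        · rintro rfl
          exact ⟨rfl, by simp [Sym2.mk_isDiag_iff, huv]⟩
      rw [show ({s(u, v)} : Set (Sym2 α)) \ Sym2.diagSet = {s(u, v)} from hd, Set.union_singleton]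
    unfold fillCount
    rw [hE]
    have hins : insert s(u, v) (addTail H u w).edgeSet \ (addTail H u w).edgeSet
        = {s(u, v)} := by
      ext e
      simp only [Set.mem_diff, Set.mem_insert_iff, Set.mem_singleton_iff]
      constructor
      · rintro ⟨h | h, h2⟩
        · exact h
        · exact absurd h h2
      · rintro rfl
        exact ⟨Or.inl rfl, hnm⟩
    rw [hins, Set.ncard_singleton]
  · rintro n ⟨G', hle, hsp, hfc⟩
    rcases Nat.eq_zero_or_pos n with rfl | h
    · exfalso
      unfold fillCount at hfc
      have hempty : G'.edgeSet \ (addTail H u w).edgeSet = ∅ :=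
        (Set.ncard_eq_zero (Set.toFinite _)).mp hfc
      have hle' : G' ≤ addTail H u w :=
        SimpleGraph.edgeSet_subset_edgeSet.mp (Set.diff_eq_empty.mp hempty)
      have hGeq : G' = addTail H u w := le_antisymm hle' hle
      exact hnot (hGeq ▸ hsp)
    · exact h
  · intro v' hv'S hnadj
    have hfv' : f v' = u := by
      by_contra hne
      exact hnadj ((hadj v' hv'S u hu).mpr (fun h => hne h.symm)).symm
    exact main v' hv'S hfv'
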